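/- (SPCR upper bound for S²⁺) Let {p_i}_{i∈I} be a finite family in ℝ³ and {q_k}_{k∈K} a finite family in ℝ, let ε ≥ 0, let r^c be a unit vector in ℝ³ and σ ≥ 0. For each i, k set θ_i = ∠(r^c, p_i), t_{ik}⁻ = −ε − ‖p_i‖·cos(max{θ_i − √2σ, 0}) + q_k and t_{ik}⁺ = ε − ‖p_i‖·cos(min{θ_i + √2σ, π}) + q_k. Then for every unit vector r with ∠(r, r^c) ≤ √2σ and every t ∈ ℝ, the number of indices i ∈ I such that |⟪r, p_i⟫ + t − q_k| ≤ ε for some k ∈ K is at most the number of indices i ∈ I such that t_{ik}⁻ ≤ t ≤ t_{ik}⁺ for some k ∈ K. -/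
import Mathlib


open InnerProductGeometry
open scoped RealInnerProductSpace

private lemma angle_triangle_unit {V : Type*} [NormedAddCommGroup V] [InnerProductSpace ℝ V]
    {x y z : V} (hx : ‖x‖ = 1) (hy : ‖y‖ = 1) (hz : ‖z‖ = 1) :
    angle x z ≤ angle x y + angle y z := by
  rcases le_or_gt Real.pi (angle x y + angle y z) with h | h
  · exact (angle_le_pi x z).trans h
  -- it suffices to compare cosines
  have key : Real.cos (angle x y + angle y z) ≤ Real.cos (angle x z) := by
    rw [Real.cos_add]
    have hcxy : Real.cos (angle x y) = ⟪x, y⟫ := by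
      rw [cos_angle, hx, hy]; norm_num
    have hcyz : Real.cos (angle y z) = ⟪y, z⟫ := by
      rw [cos_angle, hy, hz]; norm_num
    have hcxz : Real.cos (angle x z) = ⟪x, z⟫ := by
      rw [cos_angle, hx, hz]; norm_num
    have hsxy : Real.sin (angle x y) = Real.sqrt (1 - ⟪x, y⟫ * ⟪x, y⟫) := by
      have := sin_angle_mul_norm_mul_norm x y
      rw [hx, hy, real_inner_self_eq_norm_mul_norm, real_inner_self_eq_norm_mul_norm,
        hx, hy] at this
      simpa using this
    have hsyz : Real.sin (angle y z) = Real.sqrt (1 - ⟪y, z⟫ * ⟪y, z⟫) := by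
      have := sin_angle_mul_norm_mul_norm y z
      rw [hy, hz, real_inner_self_eq_norm_mul_norm, real_inner_self_eq_norm_mul_norm,
        hy, hz] at this
      simpa using this
    set x' : V := x - ⟪x, y⟫ • y with hx'
    set z' : V := z - ⟪y, z⟫ • y with hz'
    have hyy : ⟪y, y⟫ = (1:ℝ) := by
      rw [real_inner_self_eq_norm_mul_norm, hy]; norm_num
    have hxx : ⟪x, x⟫ = (1:ℝ) := by
      rw [real_inner_self_eq_norm_mul_norm, hx]; norm_num
    have hzz : ⟪z, z⟫ = (1:ℝ) := by
      rw [real_inner_self_eq_norm_mul_norm, hz]; norm_num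
    have hinner : ⟪x', z'⟫ = ⟪x, z⟫ - ⟪x, y⟫ * ⟪y, z⟫ := by
      simp only [hx', hz', inner_sub_left, inner_sub_right, real_inner_smul_left,
        real_inner_smul_right, hyy, real_inner_comm y x]
      ring
    have hnx' : ‖x'‖ = Real.sqrt (1 - ⟪x, y⟫ * ⟪x, y⟫) := by
      have h2 : ‖x'‖ ^ 2 = 1 - ⟪x, y⟫ * ⟪x, y⟫ := by
        rw [← real_inner_self_eq_norm_sq]
        simp only [hx', inner_sub_left, inner_sub_right, real_inner_smul_left,
          real_inner_smul_right, hyy, hxx, real_inner_comm y x]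
        ring
      rw [← h2, Real.sqrt_sq (norm_nonneg _)]
    have hnz' : ‖z'‖ = Real.sqrt (1 - ⟪y, z⟫ * ⟪y, z⟫) := by
      have h2 : ‖z'‖ ^ 2 = 1 - ⟪y, z⟫ * ⟪y, z⟫ := by
        rw [← real_inner_self_eq_norm_sq]
        simp only [hz', inner_sub_left, inner_sub_right, real_inner_smul_left,
          real_inner_smul_right, hyy, hzz, real_inner_comm y z]
        ring
      rw [← h2, Real.sqrt_sq (norm_nonneg _)]
    have hcs : -(‖x'‖ * ‖z'‖) ≤ ⟪x', z'⟫ :=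
      neg_le_of_abs_le (abs_real_inner_le_norm x' z')
    rw [hcxy, hcyz, hcxz, hsxy, hsyz]
    have : -(Real.sqrt (1 - ⟪x, y⟫ * ⟪x, y⟫) * Real.sqrt (1 - ⟪y, z⟫ * ⟪y, z⟫)) ≤
        ⟪x, z⟫ - ⟪x, y⟫ * ⟪y, z⟫ := by
      rw [← hnx', ← hnz', ← hinner]; exact hcs
    linarith
  by_contra hcon
  push_neg at hcon
  have h1 : Real.cos (angle x z) < Real.cos (angle x y + angle y z) :=
    Real.strictAntiOn_cos
      ⟨add_nonneg (angle_nonneg x y) (angle_nonneg y z), h.le⟩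
      ⟨angle_nonneg x z, angle_le_pi x z⟩ hcon
  linarith

private lemma angle_triangle' {V : Type*} [NormedAddCommGroup V] [InnerProductSpace ℝ V]
    (x y z : V) : angle x z ≤ angle x y + angle y z := by
  rcases eq_or_ne x 0 with rfl | hx
  · simp only [angle_zero_left]
    linarith [angle_nonneg y z]
  rcases eq_or_ne y 0 with rfl | hy
  · simp only [angle_zero_left, angle_zero_right]
    linarith [angle_le_pi x z]
  rcases eq_or_ne z 0 with rfl | hz
  · simp only [angle_zero_right]
    linarith [angle_nonneg x y]
  have hx' : (0:ℝ) < ‖x‖⁻¹ := inv_pos.mpr (norm_pos_iff.mpr hx)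
  have hy' : (0:ℝ) < ‖y‖⁻¹ := inv_pos.mpr (norm_pos_iff.mpr hy)
  have hz' : (0:ℝ) < ‖z‖⁻¹ := inv_pos.mpr (norm_pos_iff.mpr hz)
  have hu : ∀ w : V, w ≠ 0 → ‖‖w‖⁻¹ • w‖ = 1 := fun w hw => by
    rw [norm_smul, norm_inv, norm_norm, inv_mul_cancel₀ (norm_ne_zero_iff.mpr hw)]
  have key := angle_triangle_unit (hu x hx) (hu y hy) (hu z hz)
  rwa [angle_smul_left_of_pos _ _ hx', angle_smul_right_of_pos _ _ hz',
    angle_smul_left_of_pos _ _ hx', angle_smul_right_of_pos _ _ hy',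
    angle_smul_left_of_pos _ _ hy', angle_smul_right_of_pos _ _ hz'] at key

open Classical in
theorem spcr_upper_bound_upper_hemisphere {I K : Type*} [Fintype I] [Fintype K]
    (p : I → EuclideanSpace ℝ (Fin 3)) (q : K → ℝ) (ε : ℝ) (hε : 0 ≤ ε)
    (rc : EuclideanSpace ℝ (Fin 3)) (hrc : ‖rc‖ = 1) (σ : ℝ) (hσ : 0 ≤ σ) :
    ∀ r : EuclideanSpace ℝ (Fin 3), ‖r‖ = 1 → angle r rc ≤ Real.sqrt 2 * σ →
      ∀ t : ℝ,
        (Finset.univ.filter fun i => ∃ k : K, |⟪r, p i⟫ + t - q k| ≤ ε).card ≤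
          (Finset.univ.filter fun i => ∃ k : K,
            -ε - ‖p i‖ * Real.cos (max (angle rc (p i) - Real.sqrt 2 * σ) 0) + q k ≤ t ∧
            t ≤ ε - ‖p i‖ * Real.cos (min (angle rc (p i) + Real.sqrt 2 * σ) Real.pi) + q k).card := by
  intro r hr hangle t
  apply Finset.card_le_card
  intro i hi
  simp only [Finset.mem_filter, Finset.mem_univ, true_and] at hi ⊢
  obtain ⟨k, hk⟩ := hi
  refine ⟨k, ?_, ?_⟩ <;>
  · rw [abs_le] at hk
    set δ := Real.sqrt 2 * σ with hδ
    set θ := angle rc (p i) with hθ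
    set α := angle r (p i) with hα
    have hαπ : α ≤ Real.pi := angle_le_pi _ _
    have hα0 : 0 ≤ α := angle_nonneg _ _
    have hub : α ≤ θ + δ := by
      have := angle_triangle' r rc (p i)
      rw [← hθ, ← hα] at this
      linarith
    have hlb : θ - δ ≤ α := by
      have := angle_triangle' rc r (p i)
      rw [angle_comm rc r, ← hθ, ← hα] at this
      linarith
    have hmax : max (θ - δ) 0 ≤ α := max_le hlb hα0
    have hmin : α ≤ min (θ + δ) Real.pi := le_min hub hαπ
    have hcos1 : Real.cos α ≤ Real.cos (max (θ - δ) 0) :=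
      Real.cos_le_cos_of_nonneg_of_le_pi (le_max_right _ _) hαπ hmax
    have hcos2 : Real.cos (min (θ + δ) Real.pi) ≤ Real.cos α :=
      Real.cos_le_cos_of_nonneg_of_le_pi hα0 (min_le_right _ _) hmin
    have hinner : ⟪r, p i⟫ = Real.cos α * ‖p i‖ := by
      have := cos_angle_mul_norm_mul_norm r (p i)
      rw [hr, one_mul] at this
      rw [← this, hα]
    have hnorm : (0:ℝ) ≤ ‖p i‖ := norm_nonneg _
    nlinarith [hk.1, hk.2]
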